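/- In the Bernoulli model X = {0,1}ⁿ, Θ = (0,1), P θ x = θ^{T(x)}(1-θ)^{n-T(x)} with T(x) = Σ xᵢ, a statistic S : X → ℝ is a UMVUE if and only if S factors through T, i.e., there exists u : ℝ → ℝ with S = u ∘ T. -/

import Mathlib

open Finset Polynomial

lemma poly_coeffs_zero (n : ℕ) (c : ℕ → ℝ)
    (h : ∀ θ ∈ Set.Ioo (0:ℝ) 1, ∑ k ∈ Finset.range (n+1), c k * (θ^k * (1-θ)^(n-k)) = 0) :
    ∀ k ∈ Finset.range (n+1), c k = 0 := by
  set p : Polynomial ℝ := ∑ k ∈ Finset.range (n+1), C (c k) * X^k with hp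
  have hev : ∀ t > (0:ℝ), p.eval t = 0 := by
    intro t ht
    have h1t : (0:ℝ) < 1 + t := by linarith
    have hθ : t / (1+t) ∈ Set.Ioo (0:ℝ) 1 := by
      constructor
      · positivity
      · rw [div_lt_one h1t]; linarith
    have h0 := h _ hθ
    have key : ∀ k ∈ Finset.range (n+1),
        c k * ((t/(1+t))^k * (1 - t/(1+t))^(n-k)) * (1+t)^n = c k * t^k := by
      intro k hk
      have hk' : k ≤ n := by simpa [Nat.lt_succ_iff] using hk
      have h1 : 1 - t/(1+t) = 1/(1+t) := by field_simp; ring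
      rw [h1, div_pow, div_pow, one_pow]
      rw [show (1+t)^n = (1+t)^k * (1+t)^(n-k) by rw [← pow_add]; congr 1; omega]
      field_simp
    have : ∑ k ∈ Finset.range (n+1), c k * t^k = 0 := by
      rw [← Finset.sum_congr rfl key, ← Finset.sum_mul, h0, zero_mul]
    simpa [hp, eval_finset_sum] using this
  have hp0 : p = 0 := by
    apply Polynomial.eq_zero_of_infinite_isRoot
    exact (Set.Ioi_infinite 0).mono (fun x hx => hev x hx)
  intro k hk
  have := congrArg (fun q => Polynomial.coeff q k) hp0
  simp only [hp, Polynomial.finset_sum_coeff, Polynomial.coeff_C_mul, Polynomial.coeff_X_pow,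
    Polynomial.coeff_zero] at this
  simp only [mul_ite, mul_one, mul_zero] at this
  rwa [Finset.sum_ite_eq _ k, if_pos hk] at this

lemma T_le (n : ℕ) (x : Fin n → Bool) : (∑ i, if x i then 1 else 0 : ℕ) ≤ n := by
  calc (∑ i, if x i then 1 else 0 : ℕ) ≤ ∑ _i : Fin n, 1 :=
        Finset.sum_le_sum (fun i _ => by split <;> simp)
    _ = n := by simp

lemma T_pattern (n k : ℕ) (hk : k ≤ n) :
    (∑ i : Fin n, if (i : ℕ) < k then 1 else 0 : ℕ) = k := by
  rw [Fin.sum_univ_eq_sum_range (fun j => if j < k then 1 else 0)]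
  rw [Finset.sum_ite, Finset.sum_const, Finset.sum_const]
  have : (Finset.range n).filter (· < k) = Finset.range (min n k) := by
    ext j; simp [lt_min_iff]
  rw [this]
  simp [Nat.min_eq_right hk]

lemma fiber_decomp (n : ℕ) (θ : ℝ) (f : (Fin n → Bool) → ℝ) :
    ∑ x, f x * (θ ^ (∑ i, if x i then 1 else 0 : ℕ) *
        (1 - θ) ^ (n - (∑ i, if x i then 1 else 0 : ℕ)))
      = ∑ k ∈ Finset.range (n+1),
        (∑ x ∈ Finset.univ.filter (fun x => (∑ i, if x i then 1 else 0 : ℕ) = k), f x)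
          * (θ ^ k * (1 - θ) ^ (n - k)) := by
  rw [← Finset.sum_fiberwise_of_maps_to
      (g := fun x : Fin n → Bool => (∑ i, if x i then 1 else 0 : ℕ))
      (fun x _ => Finset.mem_range.2 (Nat.lt_succ_of_le (T_le n x)))]
  refine Finset.sum_congr rfl fun k _ => ?_
  rw [Finset.sum_mul]
  refine Finset.sum_congr rfl fun x hx => ?_
  rw [(Finset.mem_filter.1 hx).2]

theorem bernoulli_umvue_iff_factors (n : ℕ) (S : (Fin n → Bool) → ℝ) :
    (∀ H : (Fin n → Bool) → ℝ,
        (∀ θ ∈ Set.Ioo (0 : ℝ) 1,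
          ∑ x, H x * (θ ^ (∑ i, if x i then 1 else 0 : ℕ) *
            (1 - θ) ^ (n - (∑ i, if x i then 1 else 0 : ℕ))) = 0) →
        ∀ θ ∈ Set.Ioo (0 : ℝ) 1,
          ∑ x, S x * H x * (θ ^ (∑ i, if x i then 1 else 0 : ℕ) *
            (1 - θ) ^ (n - (∑ i, if x i then 1 else 0 : ℕ))) = 0)
      ↔ ∃ u : ℝ → ℝ, S = fun x => u ((∑ i, if x i then 1 else 0 : ℕ) : ℝ) := by
  constructor
  · intro hU
    refine ⟨fun r => S (fun i => decide ((i : ℕ) < ⌊r⌋₊)), ?_⟩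
    funext x
    set k := (∑ i, if x i then 1 else 0 : ℕ) with hkdef
    simp only [Nat.floor_natCast]
    set y : Fin n → Bool := fun i => decide ((i : ℕ) < k) with hy
    have hTy : (∑ i, if y i then 1 else 0 : ℕ) = k := by
      simp only [hy, decide_eq_true_eq]
      exact T_pattern n k (hkdef ▸ T_le n x)
    -- H = indicator x - indicator y
    set H : (Fin n → Bool) → ℝ := fun z => (if z = x then 1 else 0) - (if z = y then 1 else 0)
      with hH
    have hHzero : ∀ θ ∈ Set.Ioo (0 : ℝ) 1,
        ∑ z, H z * (θ ^ (∑ i, if z i then 1 else 0 : ℕ) *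
          (1 - θ) ^ (n - (∑ i, if z i then 1 else 0 : ℕ))) = 0 := by
      intro θ _
      simp only [hH, sub_mul, ite_mul, one_mul, zero_mul, Finset.sum_sub_distrib,
        Finset.sum_ite_eq', Finset.mem_univ, if_pos]
      rw [hTy, ← hkdef]
      ring
    have hhalf : (1/2 : ℝ) ∈ Set.Ioo (0:ℝ) 1 := by norm_num
    have := hU H hHzero (1/2) hhalf
    simp only [hH, mul_sub, sub_mul, mul_ite, ite_mul, mul_one, mul_zero, one_mul, zero_mul,
      Finset.sum_sub_distrib, Finset.sum_ite_eq', Finset.mem_univ, if_pos] at this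
    rw [hTy, ← hkdef] at this
    have hpos : (0:ℝ) < (1/2 : ℝ) ^ k * (1 - 1/2) ^ (n - k) := by positivity
    have : (S x - S y) * ((1/2 : ℝ) ^ k * (1 - 1/2) ^ (n - k)) = 0 := by linarith
    have := (mul_eq_zero.1 this).resolve_right (ne_of_gt hpos)
    linarith
  · rintro ⟨u, rfl⟩ H hH θ hθ
    set c : ℕ → ℝ := fun k =>
      ∑ x ∈ Finset.univ.filter (fun x => (∑ i, if x i then 1 else 0 : ℕ) = k), H x with hc
    have hczero : ∀ k ∈ Finset.range (n+1), c k = 0 := by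
      apply poly_coeffs_zero
      intro θ' hθ'
      rw [← fiber_decomp n θ' H]
      exact hH θ' hθ'
    rw [fiber_decomp n θ (fun x => u ((∑ i, if x i then 1 else 0 : ℕ) : ℝ) * H x)]
    refine Finset.sum_eq_zero fun k hk => ?_
    have : (∑ x ∈ Finset.univ.filter (fun x => (∑ i, if x i then 1 else 0 : ℕ) = k),
        u ((∑ i, if x i then 1 else 0 : ℕ) : ℝ) * H x) = u k * c k := by
      rw [hc, Finset.mul_sum]
      refine Finset.sum_congr rfl fun x hx => ?_
      rw [(Finset.mem_filter.1 hx).2]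
    rw [this, hczero k hk, mul_zero, zero_mul]
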